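/- Let E be a finite-dimensional real inner product space, let x : ℝ → E be differentiable, let h : E → ℝ be continuously differentiable, and let α : ℝ → ℝ be strictly monotone increasing, locally Lipschitz with α 0 = 0. Assume h (x 0) ≥ 0 and that for every t ≥ 0, the derivative of h at x t applied to the velocity x' t satisfies fderiv ℝ h (x t) (deriv x t) ≥ −α (h (x (t))). Then h (x t) ≥ 0 for all t ≥ 0; that is, the trajectory remains in the safe set C = {y : h y ≥ 0}. -/

import Mathlib

/-- Forward invariance of the safe set `C = {y : h y ≥ 0}` along a
trajectory (eq. (1) of the paper): if `h (x 0) ≥ 0` and the chain-rule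
derivative `dh(x t)[ẋ t]` satisfies the CBF inequality with a class-K
function `α` at all nonnegative times, then the trajectory stays in `C`. -/
theorem cbf_forward_invariance
    {E : Type*} [NormedAddCommGroup E] [InnerProductSpace ℝ E]
    [FiniteDimensional ℝ E]
    (x : ℝ → E) (hx : Differentiable ℝ x)
    (h : E → ℝ) (hh : ContDiff ℝ 1 h)
    (α : ℝ → ℝ) (hα : StrictMono α) (hα0 : α 0 = 0)
    (hαlip : LocallyLipschitz α)
    (h0 : 0 ≤ h (x 0))
    (hineq : ∀ t : ℝ, 0 ≤ t → -α (h (x t)) ≤ fderiv ℝ h (x t) (deriv x t)) :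
    ∀ t : ℝ, 0 ≤ t → 0 ≤ h (x t) := by
  set g : ℝ → ℝ := fun t => h (x t) with hg
  have hhd : Differentiable ℝ h := hh.differentiable one_ne_zero
  have hgd : Differentiable ℝ g := hhd.comp hx
  have hderiv : ∀ t : ℝ, deriv g t = fderiv ℝ h (x t) (deriv x t) := by
    intro t
    exact fderiv_comp_deriv t (hhd _) (hx t)
  intro t₁ ht₁
  by_contra hneg
  push_neg at hneg
  -- the set of times in [0, t₁] where g is nonnegative
  set S : Set ℝ := {t ∈ Set.Icc 0 t₁ | 0 ≤ g t} with hS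
  have hSne : S.Nonempty := ⟨0, ⟨le_rfl, ht₁⟩, h0⟩
  have hSbdd : BddAbove S := ⟨t₁, fun t ht => ht.1.2⟩
  have hSclosed : IsClosed S :=
    isClosed_Icc.inter (isClosed_le continuous_const hgd.continuous)
  set s := sSup S with hs
  have hsS : s ∈ S := hSclosed.csSup_mem hSne hSbdd
  have hs0 : 0 ≤ s := hsS.1.1
  have hst₁ : s ≤ t₁ := hsS.1.2
  have hgs : 0 ≤ g s := hsS.2
  have hslt : s < t₁ := lt_of_le_of_ne hst₁ (fun he => absurd (he ▸ hgs) (not_le.mpr hneg))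
  -- on (s, t₁], g is negative
  have hnegOn : ∀ t, s < t → t ≤ t₁ → g t < 0 := by
    intro t hts htt₁
    by_contra hge
    push_neg at hge
    have : t ∈ S := ⟨⟨hs0.trans hts.le, htt₁⟩, hge⟩
    exact absurd (le_csSup hSbdd this) (not_le.mpr hts)
  -- g strictly increasing on [s, t₁]
  have hmono : StrictMonoOn g (Set.Icc s t₁) := by
    apply strictMonoOn_of_deriv_pos (convex_Icc s t₁) hgd.continuous.continuousOn
    intro t ht
    rw [interior_Icc] at ht
    have hgt : g t < 0 := hnegOn t ht.1 ht.2.le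
    have hαlt : α (g t) < 0 := hα0 ▸ hα hgt
    have := hineq t (hs0.trans ht.1.le)
    rw [← hderiv t] at this
    linarith
  have := hmono (Set.left_mem_Icc.mpr hst₁) (Set.right_mem_Icc.mpr hst₁) hslt
  linarith
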